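/- For every positive even integer m, there exist infinitely many D_m-abundant numbers, i.e., infinitely many positive integers n with D_m(n) > n. -/

import Mathlib

open Finset

/-- The Schemmel totient function: `L m 0 = 0`, `L m 1 = 1`, and for `n > 1`,
`L m n = ∏ p^(α-1) (p - m)` over the canonical factorization of `n` if every
prime divisor of `n` exceeds `m`, and `0` otherwise. -/
def L (m n : ℕ) : ℕ :=
  if n ≤ 1 then n
  else if ∀ p ∈ n.primeFactors, m < p then
    ∏ p ∈ n.primeFactors, p ^ (n.factorization p - 1) * (p - m)
  else 0

/-- `R m n` is the least positive `k` with `L_m^{(k)}(n) ∈ {0, 1}`. -/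
noncomputable def R (m n : ℕ) : ℕ :=
  sInf {k | 0 < k ∧ ((L m)^[k] n = 0 ∨ (L m)^[k] n = 1)}

/-- `H m n = L_m^{(R_m(n))}(n)`. -/
noncomputable def H (m n : ℕ) : ℕ := (L m)^[R m n] n

/-- `D m 1 = 0` and `D m n = ∑_{i=1}^{R_m(n)} L_m^{(i)}(n)` for `n > 1`. -/
noncomputable def D (m n : ℕ) : ℕ :=
  if n = 1 then 0 else ∑ i ∈ Finset.Icc 1 (R m n), (L m)^[i] n

lemma L_lt (m : ℕ) (hm : 0 < m) {n : ℕ} (hn : 1 < n) : L m n < n := by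
  have hlt := Nat.totient_lt n hn
  refine lt_of_le_of_lt ?_ hlt
  unfold L
  rw [if_neg (by omega)]
  split
  · rw [Nat.totient_eq_prod_factorization (by omega : n ≠ 0), Finsupp.prod,
      Nat.support_factorization]
    exact Finset.prod_le_prod' fun p _ => Nat.mul_le_mul_left _ (by omega)
  · exact Nat.zero_le _

lemma S_nonempty (m : ℕ) (hm : 0 < m) (n : ℕ) :
    {k | 0 < k ∧ ((L m)^[k] n = 0 ∨ (L m)^[k] n = 1)}.Nonempty := by
  induction n using Nat.strong_induction_on with
  | _ n ih =>
    rcases le_or_gt n 1 with h | h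
    · exact ⟨1, one_pos, by simpa [L, h] using (by omega : n = 0 ∨ n = 1)⟩
    · obtain ⟨k, hk, hk2⟩ := ih (L m n) (L_lt m hm h)
      exact ⟨k + 1, k.succ_pos, by rwa [Function.iterate_succ_apply]⟩

lemma R_mem (m : ℕ) (hm : 0 < m) (n : ℕ) :
    0 < R m n ∧ ((L m)^[R m n] n = 0 ∨ (L m)^[R m n] n = 1) :=
  Nat.sInf_mem (S_nonempty m hm n)

lemma L_iter_zero (m k : ℕ) : (L m)^[k] 0 = 0 := by
  induction k with
  | zero => rfl
  | succ k ih => rw [Function.iterate_succ_apply]; simpa [L] using ih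

lemma D_zero (m : ℕ) : D m 0 = 0 := by
  simp [D, L_iter_zero]

lemma D_one (m : ℕ) : D m 1 = 0 := by simp [D]

lemma D_rec (m : ℕ) (hm : 0 < m) {n : ℕ} (hn : 1 < n) :
    D m n = L m n + D m (L m n) := by
  by_cases hL : L m n ≤ 1
  · have hR : R m n = 1 := by
      refine le_antisymm (Nat.sInf_le ⟨one_pos, by simpa [Function.iterate_one] using
        (by omega : L m n = 0 ∨ L m n = 1)⟩) ?_
      rcases Nat.eq_zero_or_pos (R m n) with h0 | h1
      · exact absurd ((R_mem m hm n).1) (by omega)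
      · omega
    have h2 : D m n = L m n := by
      rw [D, if_neg (by omega), hR, Finset.Icc_self, Finset.sum_singleton,
        Function.iterate_one]
    interval_cases h : L m n
    · simp [h2, D_zero, h]
    · simp [h2, D_one, h]
  · push_neg at hL
    have hne1 : (1:ℕ) ∉ {k | 0 < k ∧ ((L m)^[k] n = 0 ∨ (L m)^[k] n = 1)} := by
      simp only [Set.mem_setOf_eq, Function.iterate_one]
      omega
    set r := R m (L m n) with hr
    obtain ⟨hrpos, hrval⟩ := R_mem m hm (L m n)
    have hRn : R m n = r + 1 := by
      have hsub : r + 1 ∈ {k | 0 < k ∧ ((L m)^[k] n = 0 ∨ (L m)^[k] n = 1)} := by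
        refine ⟨r.succ_pos, ?_⟩
        rwa [Function.iterate_succ_apply]
      have hle : R m n ≤ r + 1 := Nat.sInf_le hsub
      obtain ⟨hp, hv⟩ := R_mem m hm n
      have hne : R m n ≠ 1 := fun h => hne1 (h ▸ R_mem m hm n)
      have h2le : 2 ≤ R m n := by omega
      have : R m n - 1 ∈ {k | 0 < k ∧ ((L m)^[k] (L m n) = 0 ∨ (L m)^[k] (L m n) = 1)} := by
        refine ⟨by omega, ?_⟩
        have : (L m)^[R m n] n = (L m)^[R m n - 1] (L m n) := by
          conv_lhs => rw [show R m n = (R m n - 1) + 1 by omega, Function.iterate_succ_apply]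
        rwa [this] at hv
      have h3 : R m (L m n) ≤ R m n - 1 := Nat.sInf_le this
      omega
    rw [D, if_neg (by omega), D, if_neg (by omega), hRn]
    rw [← Finset.Ico_add_one_right_eq_Icc, ← Finset.Ico_add_one_right_eq_Icc, Finset.sum_Ico_eq_sum_range,
      Finset.sum_Ico_eq_sum_range]
    simp only [Nat.add_sub_cancel, Nat.succ_sub_one]
    rw [Finset.sum_range_succ']
    have h1 : ∀ i, (L m)^[1 + (i + 1)] n = (L m)^[1 + i] (L m n) := by
      intro i
      rw [show 1 + (i + 1) = (1 + i) + 1 by omega, Function.iterate_succ_apply]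
    simp only [h1, Function.iterate_one]
    rw [← hr]
    simp only [show (1+0)=1 from rfl, Function.iterate_one]
    omega

lemma L_prime (m : ℕ) {p : ℕ} (hp : p.Prime) (h : m < p) : L m p = p - m := by
  unfold L
  rw [if_neg (by have := hp.two_le; omega),
    if_pos (by rw [hp.primeFactors]; simpa using h)]
  rw [hp.primeFactors, Finset.prod_singleton, Nat.Prime.factorization_self hp]
  simp

lemma L_big (m : ℕ) (hm : 0 < m) {u : ℕ} (hu : 1 < u)
    (hq : ∀ q ∈ u.primeFactors, 4 * m ^ 2 < q) : 2 * m < L m u := by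
  have hu0 : u ≠ 0 := by omega
  have hall : ∀ q ∈ u.primeFactors, m < q := fun q hqm => by nlinarith [hq q hqm]
  have hLdef : L m u = ∏ q ∈ u.primeFactors, q ^ (u.factorization q - 1) * (q - m) := by
    unfold L; rw [if_neg (by omega), if_pos hall]
  set ω := u.primeFactors.card with hω
  have hA : u ≤ L m u * 2 ^ ω := by
    conv_lhs => rw [← Nat.factorization_prod_pow_eq_self hu0]
    rw [Finsupp.prod, Nat.support_factorization, hLdef, ← Finset.prod_const,
      ← Finset.prod_mul_distrib]
    refine Finset.prod_le_prod' fun q hqm => ?_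
    have he : 1 ≤ u.factorization q :=
      (Nat.Prime.factorization_pos_of_dvd (Nat.prime_of_mem_primeFactors hqm) hu0
        (Nat.dvd_of_mem_primeFactors hqm))
    have h2m : 2 * m ≤ q := by nlinarith [hq q hqm]
    calc q ^ u.factorization q = q ^ (u.factorization q - 1) * q := by
          rw [← pow_succ]; congr 1; omega
      _ ≤ q ^ (u.factorization q - 1) * ((q - m) * 2) := by
          exact Nat.mul_le_mul_left _ (by omega)
      _ = q ^ (u.factorization q - 1) * (q - m) * 2 := by ring
  have hB : (4 * m ^ 2 + 1) ^ ω ≤ u := by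
    calc (4 * m ^ 2 + 1) ^ ω = ∏ _q ∈ u.primeFactors, (4 * m ^ 2 + 1) := by
          rw [Finset.prod_const]
      _ ≤ ∏ q ∈ u.primeFactors, q := Finset.prod_le_prod' fun q hqm => hq q hqm
      _ ≤ u := Nat.le_of_dvd (by omega) (Nat.prod_primeFactors_dvd u)
  have h4 : (4:ℕ) ^ ω ≤ u := le_trans (Nat.pow_le_pow_left (by nlinarith) ω) hB
  have hsq : u * u ≤ (L m u * L m u) * u := by
    calc u * u ≤ (L m u * 2 ^ ω) * (L m u * 2 ^ ω) := Nat.mul_le_mul hA hA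
      _ = (L m u * L m u) * (4 ^ ω) := by
          rw [show (4:ℕ) = 2 * 2 from rfl, mul_pow]; ring
      _ ≤ (L m u * L m u) * u := Nat.mul_le_mul_left _ h4
  have huLL : u ≤ L m u * L m u := by
    have := Nat.le_of_mul_le_mul_right (by linarith [hsq] : u * u ≤ L m u * L m u * u) (by omega : 0 < u)
    exact this
  have hub : 4 * m ^ 2 < u := by
    obtain ⟨q, hq1, hq2⟩ := Nat.exists_prime_and_dvd (by omega : u ≠ 1)
    have hqm : q ∈ u.primeFactors := Nat.mem_primeFactors.mpr ⟨hq1, hq2, hu0⟩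
    exact lt_of_lt_of_le (hq q hqm) (Nat.le_of_dvd (by omega) hq2)
  by_contra hcon
  push_neg at hcon
  have : L m u * L m u ≤ 2 * m * (2 * m) := Nat.mul_le_mul hcon hcon
  nlinarith

lemma exists_residue (m : ℕ) (hme : Even m) (S : Finset ℕ) (hS : ∀ q ∈ S, q.Prime) :
    ∃ a : ℕ, ∀ q ∈ S, (a : ZMod q) ≠ 0 ∧ (a : ZMod q) ≠ (m : ZMod q) := by
  classical
  induction S using Finset.induction_on with
  | empty => exact ⟨1, by simp⟩
  | @insert q₀ S hq₀S ih =>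
    obtain ⟨a, ha⟩ := ih fun q hq => hS q (Finset.mem_insert_of_mem hq)
    have hq₀ : q₀.Prime := hS q₀ (Finset.mem_insert_self _ _)
    -- choose b
    set b : ℕ := if (m : ZMod q₀) = 1 then 2 else 1 with hb
    have hbprop : (b : ZMod q₀) ≠ 0 ∧ (b : ZMod q₀) ≠ (m : ZMod q₀) := by
      by_cases hm1 : (m : ZMod q₀) = 1
      · rw [hb, if_pos hm1]
        constructor
        · intro h
          rw [ZMod.natCast_eq_zero_iff] at h
          have hq2 : q₀ = 2 := ((Nat.prime_dvd_prime_iff_eq hq₀ Nat.prime_two).mp h)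
          subst hq2
          obtain ⟨t, rfl⟩ := hme
          push_cast at hm1
          have h20 : ((t : ZMod 2) + t) = 0 := by
            have he : ((t : ZMod 2) + t) = 2 * t := by ring
            rw [he, show (2 : ZMod 2) = 0 by decide, zero_mul]
          rw [h20] at hm1
          exact one_ne_zero hm1.symm
        · rw [hm1]
          intro h
          rw [show (1 : ZMod q₀) = ((1:ℕ) : ZMod q₀) by simp,
            ZMod.natCast_eq_natCast_iff] at h
          have hdd := (Nat.modEq_iff_dvd' (by omega)).mp h.symm
          rw [Nat.dvd_one] at hdd
          have := hq₀.two_le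
          omega
      · rw [hb, if_neg hm1]
        refine ⟨?_, ?_⟩
        · intro h
          rw [ZMod.natCast_eq_zero_iff, Nat.dvd_one] at h
          have := hq₀.two_le
          omega
        · intro h
          exact hm1 (by rw [← h]; simp)
    -- CRT
    set P : ℕ := ∏ q ∈ S, q with hP
    have hco : Nat.Coprime q₀ P := by
      rw [hP, Nat.coprime_prod_right_iff]
      intro q hq
      exact (Nat.coprime_primes hq₀ (hS q (Finset.mem_insert_of_mem hq))).mpr
        (fun h => hq₀S (h ▸ hq))
    obtain ⟨k, hk1, hk2⟩ := Nat.chineseRemainder hco b a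
    refine ⟨k, fun q hq => ?_⟩
    rcases Finset.mem_insert.mp hq with rfl | hqS
    · have : (k : ZMod q) = (b : ZMod q) := (ZMod.natCast_eq_natCast_iff _ _ _).mpr hk1
      rw [this]; exact hbprop
    · have hdvd : q ∣ P := hP ▸ Finset.dvd_prod_of_mem _ hqS
      have : (k : ZMod q) = (a : ZMod q) :=
        (ZMod.natCast_eq_natCast_iff _ _ _).mpr (Nat.ModEq.of_dvd hdvd hk2)
      rw [this]; exact ha q hqS

theorem infinitely_many_Dm_abundant (m : ℕ) (hm : 0 < m) (hme : Even m) :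
    {n : ℕ | 0 < n ∧ n < D m n}.Infinite := by
  classical
  set B : ℕ := 4 * m ^ 2 with hB
  set S : Finset ℕ := (Finset.range (B + 1)).filter Nat.Prime with hS
  have hSprime : ∀ q ∈ S, q.Prime := fun q hq => (Finset.mem_filter.mp hq).2
  obtain ⟨a, ha⟩ := exists_residue m hme S hSprime
  set M : ℕ := ∏ q ∈ S, q with hM
  have hM0 : M ≠ 0 := Finset.prod_ne_zero_iff.mpr fun q hq => (hSprime q hq).pos.ne'
  haveI : NeZero M := ⟨hM0⟩
  have hunit : IsUnit ((a : ZMod M)) := by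
    rw [ZMod.isUnit_iff_coprime, hM, Nat.coprime_prod_right_iff]
    intro q hq
    haveI : Fact (q.Prime) := ⟨hSprime q hq⟩
    rw [Nat.coprime_comm]
    exact (Nat.Prime.coprime_iff_not_dvd (hSprime q hq)).mpr
      (fun hdvd => (ha q hq).1 ((ZMod.natCast_eq_zero_iff a q).mpr hdvd))
  have hinf := Nat.infinite_setOfPred_prime_and_eq_mod hunit
  refine Set.Infinite.mono ?_ (hinf.diff (Set.finite_Iic (m + 1)))
  rintro p ⟨⟨hp, hpa⟩, hpgt⟩
  simp only [Set.mem_Iic, not_le] at hpgt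
  have hpm : m + 1 < p := hpgt
  set u : ℕ := p - m with hu
  have hu1 : 1 < u := by omega
  -- all prime factors of u are > B
  have hqu : ∀ q ∈ u.primeFactors, 4 * m ^ 2 < q := by
    intro q hqmem
    have hq : q.Prime := Nat.prime_of_mem_primeFactors hqmem
    have hqd : q ∣ u := Nat.dvd_of_mem_primeFactors hqmem
    by_contra hle
    push_neg at hle
    have hqS : q ∈ S := Finset.mem_filter.mpr ⟨Finset.mem_range.mpr (by omega), hq⟩
    have hqM : q ∣ M := hM ▸ Finset.dvd_prod_of_mem _ hqS
    have hcast : (p : ZMod q) = (a : ZMod q) := by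
      have := congrArg (ZMod.castHom hqM (ZMod q)) hpa
      rwa [map_natCast, map_natCast] at this
    have hmod : p ≡ m [MOD q] := ((Nat.modEq_iff_dvd' (by omega : m ≤ p)).mpr hqd).symm
    exact (ha q hqS).2 (hcast ▸ (ZMod.natCast_eq_natCast_iff _ _ _).mpr hmod)
  have hLu : 2 * m < L m u := L_big m hm hu1 hqu
  have hLp : L m p = u := L_prime m hp (by omega)
  have hDp : D m p = u + D m u := by
    rw [D_rec m hm (by have := hp.two_le; omega : 1 < p), hLp]
  have hDu : L m u ≤ D m u := by
    rw [D_rec m hm hu1]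
    exact Nat.le_add_right _ _
  constructor
  · exact hp.pos
  · have : p = u + m := by omega
    omega
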